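/- Let A be the n×n upper unitriangular matrix with entries A_{ij} = G_{ij} for i < j, A_{ii} = 1, A_{ij} = 0 for i > j, over a commutative ring, and let B_{i,i+1} be the matrix equal to the identity except for the 2×2 block at rows/columns i, i+1 given by [[G_{i,i+1}, −1],[1, 0]]. Then B_{i,i+1} · A · B_{i,i+1}ᵀ is again upper unitriangular, with entries given by: (i+1,j)-entry = G_{i,j} for j > i+1; (j,i+1)-entry = G_{j,i} for j < i; (i,j)-entry = G_{i,j}G_{i,i+1} − G_{i+1,j} for j > i+1; (j,i)-entry = G_{j,i}G_{i,i+1} − G_{j,i+1} for j < i; (i,i+1)-entry = G_{i,i+1}; all other entries unchanged. -/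

import Mathlib

open Matrix

/-- The upper unitriangular matrix built from the `G_{ij}`. -/
def Amat {R : Type*} [CommRing R] {n : ℕ} (G : Fin n → Fin n → R) :
    Matrix (Fin n) (Fin n) R :=
  fun j k => if j = k then 1 else if (j : ℕ) < k then G j k else 0

/-- The braid-move matrix `B_{i,i+1}` with 2×2 block `[[G_{i,i+1}, -1],[1,0]]`
at rows/columns `i, i'`. -/
def Bmat {R : Type*} [CommRing R] {n : ℕ} (i i' : Fin n) (g : R) :
    Matrix (Fin n) (Fin n) R :=
  fun j k =>
    if j = i ∧ k = i then g
    else if j = i ∧ k = i' then -1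
    else if j = i' ∧ k = i then 1
    else if j = i' ∧ k = i' then 0
    else if j = k then 1 else 0

/-- The transformed entries `G̃` of the braid-group move `R_{i,i+1}`. -/
def Gtilde {R : Type*} [CommRing R] {n : ℕ} (i i' : Fin n) (G : Fin n → Fin n → R) :
    Fin n → Fin n → R :=
  fun j k =>
    if j = i' ∧ (i' : ℕ) < k then G i k
    else if k = i' ∧ (j : ℕ) < i then G j i
    else if j = i ∧ (i' : ℕ) < k then G i k * G i i' - G i' k
    else if k = i ∧ (j : ℕ) < i then G j i * G i i' - G j i'
    else if j = i ∧ k = i' then G i i'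
    else G j k

lemma Bmul {R : Type*} [CommRing R] {n : ℕ} (i i' : Fin n) (hne : i ≠ i') (g : R)
    (M : Matrix (Fin n) (Fin n) R) :
    Bmat i i' g * M =
      fun j k => if j = i then g * M i k - M i' k else if j = i' then M i k else M j k := by
  ext j k
  rw [Matrix.mul_apply]
  by_cases hj : j = i
  · subst hj
    have key : ∀ a : Fin n, Bmat j i' g j a * M a k =
        (if a = j then g * M a k else 0) + (if a = i' then -(M a k) else 0) := by
      intro a
      by_cases h1 : a = j
      · subst h1; simp [Bmat, hne, Ne.symm hne]
      · by_cases h2 : a = i'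
        · subst h2; simp [Bmat, hne, Ne.symm hne, h1]
        · simp [Bmat, h1, h2, Ne.symm h1, Ne.symm h2, hne]
    simp only [key, Finset.sum_add_distrib, Finset.sum_ite_eq', Finset.mem_univ, if_true]
    simp [sub_eq_add_neg]
  · by_cases hj' : j = i'
    · subst hj'
      have key : ∀ a : Fin n, Bmat i j g j a * M a k = (if a = i then M a k else 0) := by
        intro a
        by_cases h1 : a = i
        · subst h1; simp [Bmat, hne, Ne.symm hne]
        · by_cases h2 : a = j
          · subst h2; simp [Bmat, hne, Ne.symm hne, h1]
          · simp [Bmat, h1, h2, hne, Ne.symm hne, Ne.symm h1, Ne.symm h2]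
      simp only [key, Finset.sum_ite_eq', Finset.mem_univ, if_true]
      simp [Ne.symm hne]
    · have key : ∀ a : Fin n, Bmat i i' g j a * M a k = (if a = j then M a k else 0) := by
        intro a
        by_cases h1 : a = j
        · subst h1; simp [Bmat, hj, hj']
        · simp [Bmat, hj, hj', h1, Ne.symm h1]
      simp only [key, Finset.sum_ite_eq', Finset.mem_univ, if_true]
      simp [hj, hj']

lemma mulBT {R : Type*} [CommRing R] {n : ℕ} (i i' : Fin n) (hne : i ≠ i') (g : R)
    (M : Matrix (Fin n) (Fin n) R) :
    M * (Bmat i i' g)ᵀ =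
      fun j k => if k = i then g * M j i - M j i' else if k = i' then M j i else M j k := by
  ext j k
  rw [Matrix.mul_apply]
  simp only [Matrix.transpose_apply]
  by_cases hk : k = i
  · subst hk
    have key : ∀ a : Fin n, M j a * Bmat k i' g k a =
        (if a = k then g * M j a else 0) + (if a = i' then -(M j a) else 0) := by
      intro a
      by_cases h1 : a = k
      · subst h1; simp [Bmat, hne, Ne.symm hne]; ring
      · by_cases h2 : a = i'
        · subst h2; simp [Bmat, hne, Ne.symm hne, h1]
        · simp [Bmat, h1, h2, Ne.symm h1, Ne.symm h2, hne]
    simp only [key, Finset.sum_add_distrib, Finset.sum_ite_eq', Finset.mem_univ, if_true]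
    simp [sub_eq_add_neg]
  · by_cases hk' : k = i'
    · subst hk'
      have key : ∀ a : Fin n, M j a * Bmat i k g k a = (if a = i then M j a else 0) := by
        intro a
        by_cases h1 : a = i
        · subst h1; simp [Bmat, hne, Ne.symm hne]
        · by_cases h2 : a = k
          · subst h2; simp [Bmat, hne, Ne.symm hne, h1]
          · simp [Bmat, h1, h2, hne, Ne.symm hne, Ne.symm h1, Ne.symm h2]
      simp only [key, Finset.sum_ite_eq', Finset.mem_univ, if_true]
      simp [Ne.symm hne]
    · have key : ∀ a : Fin n, M j a * Bmat i i' g k a = (if a = k then M j a else 0) := by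
        intro a
        by_cases h1 : a = k
        · subst h1; simp [Bmat, hk, hk']
        · simp [Bmat, hk, hk', h1, Ne.symm h1]
      simp only [key, Finset.sum_ite_eq', Finset.mem_univ, if_true]
      simp [hk, hk']

set_option maxHeartbeats 1600000 in
theorem braid_move_matrix_form {R : Type*} [CommRing R] {n : ℕ}
    (G : Fin n → Fin n → R) (i i' : Fin n) (h : (i : ℕ) + 1 = i') :
    Bmat i i' (G i i') * Amat G * (Bmat i i' (G i i'))ᵀ = Amat (Gtilde i i' G) := by
  have hne : i ≠ i' := by
    intro e; rw [e] at h; omega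
  have hlt : (i : ℕ) < (i' : ℕ) := by omega
  rw [mulBT i i' hne, Bmul i i' hne]
  ext j k
  by_cases hji : j = i <;> by_cases hji' : j = i' <;>
    by_cases hki : k = i <;> by_cases hki' : k = i' <;>
    simp_all [Amat, Gtilde] <;>
    (try split_ifs)
  all_goals
    first
      | rfl
      | ring1
      | omega
      | (exfalso; fin_omega)
      | (simp_all only [Fin.ext_iff, Fin.lt_def, Fin.le_def, not_lt, not_le]; first | ring1 | omega)
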